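/- Let π₀, π₁ ∈ [0,1) with π₀ + π₁ < 1, and let P₀, P₁ be mutually irreducible probability measures. Define P̃₀ = (1-π₀)P₀ + π₀P₁ and P̃₁ = (1-π₁)P₁ + π₁P₀. Then ν*(P̃₀, P̃₁) = π₀/(1-π₁) and ν*(P̃₁, P̃₀) = π₁/(1-π₀). -/

import Mathlib

open MeasureTheory

/-- The mixture `(1-a)·P + a·Q` of two measures. -/
noncomputable def mix {X : Type*} [MeasurableSpace X] (a : ℝ) (P Q : Measure X) :
    Measure X :=
  ENNReal.ofReal (1 - a) • P + ENNReal.ofReal a • Q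

/-- `G` is irreducible with respect to `H`: no decomposition `G = γ·H + (1-γ)·F'`
with `F'` a probability measure and `0 < γ ≤ 1`. -/
def Irred {X : Type*} [MeasurableSpace X] (G H : Measure X) : Prop :=
  ¬ ∃ (γ : ℝ) (F' : Measure X), IsProbabilityMeasure F' ∧ 0 < γ ∧ γ ≤ 1 ∧
      G = mix γ F' H

/-- Mutual irreducibility. -/
def MutIrred {X : Type*} [MeasurableSpace X] (P Q : Measure X) : Prop :=
  Irred P Q ∧ Irred Q P

/-- The set of feasible mixture proportions of `H` in `F`. -/
def nuSet {X : Type*} [MeasurableSpace X] (F H : Measure X) : Set ℝ :=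
  {α | α ∈ Set.Icc (0:ℝ) 1 ∧
    ∃ G' : Measure X, IsProbabilityMeasure G' ∧ F = mix α G' H}

/-- `ν*(F,H)`: the maximal proportion of `H` in `F`. -/
noncomputable def nuStar {X : Type*} [MeasurableSpace X] (F H : Measure X) : ℝ :=
  sSup (nuSet F H)

lemma mix_apply {X : Type*} [MeasurableSpace X] (a : ℝ) (P Q : Measure X) (s : Set X) :
    mix a P Q s = ENNReal.ofReal (1-a) * P s + ENNReal.ofReal a * Q s := by
  simp [mix]

lemma comb_toReal (a b : ℝ) (ha : 0 ≤ a) (hb : 0 ≤ b) (x y : ENNReal) (hx : x ≠ ⊤) (hy : y ≠ ⊤) :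
    (ENNReal.ofReal a * x + ENNReal.ofReal b * y).toReal = a * x.toReal + b * y.toReal := by
  rw [ENNReal.toReal_add (by finiteness) (by finiteness), ENNReal.toReal_mul, ENNReal.toReal_mul,
    ENNReal.toReal_ofReal ha, ENNReal.toReal_ofReal hb]

lemma nuStar_mix {X : Type*} [MeasurableSpace X] (π₀ π₁ : ℝ)
    (h00 : 0 ≤ π₀) (h10 : 0 ≤ π₁) (hsum : π₀ + π₁ < 1)
    (P₀ P₁ : Measure X) [IsProbabilityMeasure P₀] [IsProbabilityMeasure P₁]
    (hirr : Irred P₀ P₁) :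
    nuStar (mix π₀ P₀ P₁) (mix π₁ P₁ P₀) = π₀ / (1 - π₁) := by
  have h01 : π₀ < 1 := by linarith
  have h11 : π₁ < 1 := by linarith
  have h1π₁ : (0:ℝ) < 1 - π₁ := by linarith
  set α : ℝ := π₀ / (1 - π₁) with hα
  have hα0 : 0 ≤ α := div_nonneg h00 h1π₁.le
  have hα1 : α ≤ 1 := (div_le_one h1π₁).mpr (by linarith)
  -- membership
  have hmem : α ∈ nuSet (mix π₀ P₀ P₁) (mix π₁ P₁ P₀) := by
    refine ⟨⟨hα0, hα1⟩, P₀, inferInstance, ?_⟩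
    ext s hs
    rw [mix_apply, mix_apply, mix_apply]
    have hp : P₀ s ≠ ⊤ := measure_ne_top _ _
    have hq : P₁ s ≠ ⊤ := measure_ne_top _ _
    refine (ENNReal.toReal_eq_toReal_iff' (by finiteness) (by finiteness)).mp ?_
    rw [comb_toReal _ _ (by linarith) h00 _ _ hp hq,
      comb_toReal _ _ (by linarith) hα0 _ _ hp (by finiteness),
      comb_toReal _ _ (by linarith) h10 _ _ hq hp, hα]
    field_simp
    ring
  -- upper bound
  have hub : ∀ β ∈ nuSet (mix π₀ P₀ P₁) (mix π₁ P₁ P₀), β ≤ α := by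
    rintro β ⟨⟨hβ0, hβ1⟩, G', hG', hEq⟩
    by_contra hcon
    push_neg at hcon
    have hβπ : π₀ < β * (1 - π₁) := by
      rw [hα, div_lt_iff₀ h1π₁] at hcon; linarith
    have hβπ₁ : β * π₁ ≤ π₁ := by nlinarith
    set c : ℝ := 1 - π₀ - β * π₁ with hc
    have hc0 : 0 < c := by linarith
    set γ : ℝ := (β * (1 - π₁) - π₀) / c with hγ
    have hγ0 : 0 < γ := div_pos (by linarith) hc0
    have hγ1 : γ ≤ 1 := (div_le_one hc0).mpr (by nlinarith)
    refine hirr ⟨γ, G', hG', hγ0, hγ1, ?_⟩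
    ext s hs
    have hp : P₀ s ≠ ⊤ := measure_ne_top _ _
    have hq : P₁ s ≠ ⊤ := measure_ne_top _ _
    have hg : G' s ≠ ⊤ := measure_ne_top _ _
    have hEs : (mix π₀ P₀ P₁) s = (mix β G' (mix π₁ P₁ P₀)) s := by rw [hEq]
    rw [mix_apply, mix_apply, mix_apply] at hEs
    have hreal := congrArg ENNReal.toReal hEs
    rw [comb_toReal _ _ (by linarith) h00 _ _ hp hq,
      comb_toReal _ _ (by linarith) hβ0 _ _ hg (by finiteness),
      comb_toReal _ _ (by linarith) h10 _ _ hq hp] at hreal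
    rw [mix_apply]
    refine (ENNReal.toReal_eq_toReal_iff' hp (by finiteness)).mp ?_
    rw [comb_toReal _ _ (by linarith) hγ0.le _ _ hg hq]
    rw [hγ, hc]
    have hc0' : 1 - π₀ - β * π₁ ≠ 0 := by linarith
    field_simp
    nlinarith [hreal]
  have hne : (nuSet (mix π₀ P₀ P₁) (mix π₁ P₁ P₀)).Nonempty := ⟨α, hmem⟩
  have hbdd : BddAbove (nuSet (mix π₀ P₀ P₁) (mix π₁ P₁ P₀)) := ⟨α, hub⟩
  exact le_antisymm (csSup_le hne hub) (le_csSup hbdd hmem)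

theorem nuStar_of_contaminated {X : Type*} [MeasurableSpace X] (π₀ π₁ : ℝ)
    (hπ₀ : π₀ ∈ Set.Ico (0:ℝ) 1) (hπ₁ : π₁ ∈ Set.Ico (0:ℝ) 1)
    (hsum : π₀ + π₁ < 1)
    (P₀ P₁ Pt₀ Pt₁ : Measure X)
    [IsProbabilityMeasure P₀] [IsProbabilityMeasure P₁]
    (hmi : MutIrred P₀ P₁)
    (hPt₀ : Pt₀ = mix π₀ P₀ P₁) (hPt₁ : Pt₁ = mix π₁ P₁ P₀) :
    nuStar Pt₀ Pt₁ = π₀ / (1 - π₁) ∧ nuStar Pt₁ Pt₀ = π₁ / (1 - π₀) := by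
  subst hPt₀ hPt₁
  constructor
  · exact nuStar_mix π₀ π₁ hπ₀.1 hπ₁.1 hsum P₀ P₁ hmi.1
  · exact nuStar_mix π₁ π₀ hπ₁.1 hπ₀.1 (by linarith) P₁ P₀ hmi.2
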